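/- Let f be continuous and strictly quasi-convex on a compact convex set D ⊆ ℝ^d that is not a singleton, and let F ∈ (0,1). For ε > 0 small enough, the minimum value δ(ε) of g(y₁,y₂) = f(y₂) - f(F·y₁ + (1-F)·y₂) over the set of pairs (y₁,y₂) ∈ D × D with ‖y₁ - y₂‖ ≥ ε and f(y₁) ≤ f(y₂) exists and is strictly positive. -/
import Mathlib


/-- Lemma II.1: minimum of g over the feasible region exists and is positive. -/
theorem stmt_0 {d : ℕ} (D : Set (EuclideanSpace ℝ (Fin d)))
    (hDc : IsCompact D) (hDconv : Convex ℝ D) (hDnt : D.Nontrivial)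
    (f : EuclideanSpace ℝ (Fin d) → ℝ) (hf : ContinuousOn f D)
    (hq : ∀ x ∈ D, ∀ y ∈ D, x ≠ y → ∀ t ∈ Set.Ioo (0:ℝ) 1,
        f (t • x + (1 - t) • y) < max (f x) (f y))
    (F : ℝ) (hF : F ∈ Set.Ioo (0:ℝ) 1) :
    ∃ ε₀ > 0, ∀ ε : ℝ, 0 < ε → ε ≤ ε₀ →
      ∃ δ > 0,
        (∃ y₁ ∈ D, ∃ y₂ ∈ D, ε ≤ ‖y₁ - y₂‖ ∧ f y₁ ≤ f y₂ ∧
          f y₂ - f (F • y₁ + (1 - F) • y₂) = δ) ∧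
        (∀ y₁ ∈ D, ∀ y₂ ∈ D, ε ≤ ‖y₁ - y₂‖ → f y₁ ≤ f y₂ →
          δ ≤ f y₂ - f (F • y₁ + (1 - F) • y₂)) := by
  classical
  obtain ⟨a, ha, b, hb, hab⟩ := hDnt
  refine ⟨‖a - b‖, by simpa [sub_ne_zero] using hab, ?_⟩
  intro ε hε hε₀
  set T : Set (EuclideanSpace ℝ (Fin d) × EuclideanSpace ℝ (Fin d)) := (D ×ˢ D) ∩ {p : EuclideanSpace ℝ (Fin d) × EuclideanSpace ℝ (Fin d) | ε ≤ ‖p.1 - p.2‖} with hT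
  have hTclosed : IsClosed T := by
    apply IsClosed.inter (hDc.prod hDc).isClosed
    have : Continuous fun p : EuclideanSpace ℝ (Fin d) × EuclideanSpace ℝ (Fin d) => ‖p.1 - p.2‖ :=
      (continuous_fst.sub continuous_snd).norm
    exact isClosed_le continuous_const this
  have hTcomp : IsCompact T :=
    ((hDc.prod hDc).inter_right (by
      have : Continuous fun p : EuclideanSpace ℝ (Fin d) × EuclideanSpace ℝ (Fin d) => ‖p.1 - p.2‖ :=
        (continuous_fst.sub continuous_snd).norm
      exact isClosed_le continuous_const this))
  have hTsub : T ⊆ D ×ˢ D := Set.inter_subset_left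
  have hcontT : ContinuousOn (fun p : EuclideanSpace ℝ (Fin d) × EuclideanSpace ℝ (Fin d) => f p.2 - f p.1) T := by
    refine ContinuousOn.sub ?_ ?_
    · exact hf.comp continuous_snd.continuousOn (fun p hp => (hTsub hp).2)
    · exact hf.comp continuous_fst.continuousOn (fun p hp => (hTsub hp).1)
  set S : Set (EuclideanSpace ℝ (Fin d) × EuclideanSpace ℝ (Fin d)) := T ∩ ((fun p : EuclideanSpace ℝ (Fin d) × EuclideanSpace ℝ (Fin d) => f p.2 - f p.1) ⁻¹' Set.Ici 0) with hSdef
  have hSclosed : IsClosed S :=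
    hcontT.preimage_isClosed_of_isClosed hTclosed isClosed_Ici
  have hScomp : IsCompact S := hTcomp.of_isClosed_subset hSclosed Set.inter_subset_left
  have hmemS : ∀ {y₁ y₂ : EuclideanSpace ℝ (Fin d)}, y₁ ∈ D → y₂ ∈ D → ε ≤ ‖y₁ - y₂‖ → f y₁ ≤ f y₂ →
      (y₁, y₂) ∈ S := by
    intro y₁ y₂ h1 h2 h3 h4
    exact ⟨⟨⟨h1, h2⟩, h3⟩, by simpa using sub_nonneg.mpr h4⟩
  have hne : S.Nonempty := by
    rcases le_total (f a) (f b) with h | h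
    · exact ⟨(a, b), hmemS ha hb hε₀ h⟩
    · exact ⟨(b, a), hmemS hb ha (by rwa [norm_sub_rev]) h⟩
  -- the objective g
  set g : EuclideanSpace ℝ (Fin d) × EuclideanSpace ℝ (Fin d) → ℝ := fun p => f p.2 - f (F • p.1 + (1 - F) • p.2) with hg
  have hmapsD : ∀ p ∈ S, F • p.1 + (1 - F) • p.2 ∈ D := by
    intro p hp
    have h1 := (hTsub hp.1).1
    have h2 := (hTsub hp.1).2
    exact hDconv h1 h2 (le_of_lt hF.1) (by linarith [hF.2]) (by ring)
  have hgcont : ContinuousOn g S := by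
    refine ContinuousOn.sub ?_ ?_
    · exact hf.comp continuous_snd.continuousOn (fun p hp => (hTsub hp.1).2)
    · refine hf.comp ?_ hmapsD
      exact ((continuous_fst.const_smul F).add
        (continuous_snd.const_smul (1 - F))).continuousOn
  obtain ⟨p, hpS, hpmin⟩ := hScomp.exists_isMinOn hne hgcont
  have hp1 : p.1 ∈ D := (hTsub hpS.1).1
  have hp2 : p.2 ∈ D := (hTsub hpS.1).2
  have hpnorm : ε ≤ ‖p.1 - p.2‖ := hpS.1.2
  have hpf : f p.1 ≤ f p.2 := by
    have := hpS.2
    simpa [sub_nonneg] using this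
  have hpne : p.1 ≠ p.2 := by
    intro h
    rw [h, sub_self, norm_zero] at hpnorm
    linarith
  have hδpos : 0 < g p := by
    have := hq p.1 hp1 p.2 hp2 hpne F hF
    rw [max_eq_right hpf] at this
    simpa [hg, sub_pos] using this
  refine ⟨g p, hδpos, ⟨p.1, hp1, p.2, hp2, hpnorm, hpf, rfl⟩, ?_⟩
  intro y₁ h1 y₂ h2 h3 h4
  exact hpmin (hmemS h1 h2 h3 h4)
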